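/- arXiv:1505.07440 — 3 statements merged into one kernel-verified Lean document; each statement's English description precedes it below -/
import Mathlib

section
/- Let P ⊂ ℝ^d be a full-dimensional polytope dissected as P = P₁ ∪ ⋯ ∪ P_k where each P_i is a full-dimensional polytope and dim(P_i ∩ P_j) < d for i ≠ j. Let q ∈ ℝ^d be a point not lying on any facet-defining hyperplane of any P_i. Then the half-open polytopes H_q P₁, …, H_q P_k are pairwise disjoint and their union is H_q P, where H_q Q denotes Q with all facets removed whose facet hyperplane strictly separates q from Q. -/
/-- The half-open polytope `H_q P` associated to a full-dimensional polytope
`P = {x : f x ≤ 0 for all f ∈ F}` (given by its facet inequalities `F`) and a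
general point `q`: the facets whose hyperplane strictly separates `q` from `P`
(i.e. `f q > 0`) are removed. -/
def halfOpenPolytope (d : ℕ) (F : Finset ((Fin d → ℝ) →ᵃ[ℝ] ℝ))
    (q : Fin d → ℝ) : Set (Fin d → ℝ) :=
  {x | (∀ f ∈ F, f x ≤ 0) ∧ ∀ f ∈ F, 0 < f q → f x < 0}

open Filter Topology

private lemma apply_lineMap' (d : ℕ) (f : (Fin d → ℝ) →ᵃ[ℝ] ℝ) (x q : Fin d → ℝ) (t : ℝ) :
    f (AffineMap.lineMap x q t) = f x + t * (f q - f x) := by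
  rw [AffineMap.apply_lineMap, AffineMap.lineMap_apply]
  simp [vsub_eq_sub]; ring

/-- If all facet hyperplanes miss `q`, then interior points satisfy all inequalities
strictly. -/
private lemma facet_lt_of_interior (d : ℕ) (F : Finset ((Fin d → ℝ) →ᵃ[ℝ] ℝ))
    (q x : Fin d → ℝ) (hq : ∀ f ∈ F, f q ≠ 0)
    (hx : x ∈ interior {y | ∀ f ∈ F, f y ≤ 0}) : ∀ f ∈ F, f x < 0 := by
  intro f hf
  have hle : f x ≤ 0 := interior_subset hx f hf
  rcases hle.lt_or_eq with h | h
  · exact h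
  exfalso
  apply hq f hf
  obtain ⟨ε, hε, hball⟩ := Metric.mem_nhds_iff.1 (mem_interior_iff_mem_nhds.1 hx)
  have hlin : ∀ v : Fin d → ℝ, f.linear v ≤ 0 := by
    intro v
    by_cases hv : v = 0
    · simp [hv]
    have hvn : 0 < ‖v‖ := norm_pos_iff.2 hv
    set δ : ℝ := ε / (2 * ‖v‖) with hδdef
    have hδ : 0 < δ := div_pos hε (by positivity)
    have hmem : x + δ • v ∈ Metric.ball x ε := by
      rw [Metric.mem_ball, dist_self_add_left, norm_smul, Real.norm_eq_abs,
        abs_of_pos hδ, hδdef]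
      rw [div_mul_eq_mul_div, mul_comm]
      rw [div_lt_iff₀ (by positivity)]
      nlinarith
    have hfy : f (x + δ • v) ≤ 0 := hball hmem f hf
    have hcalc : f (x + δ • v) = δ * f.linear v := by
      have : x + δ • v = (δ • v) +ᵥ x := by
        simp [vadd_eq_add, add_comm]
      rw [this, AffineMap.map_vadd, vadd_eq_add, map_smul, h]
      simp
    rw [hcalc] at hfy
    exact nonpos_of_mul_nonpos_right (by linarith [mul_comm δ (f.linear v)]) hδ
  have hlin0 : ∀ v : Fin d → ℝ, f.linear v = 0 := by
    intro v
    have h1 := hlin v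
    have h2 := hlin (-v)
    rw [map_neg] at h2
    linarith
  have : q = (q - x) +ᵥ x := by simp [vadd_eq_add]
  rw [this, AffineMap.map_vadd, vadd_eq_add, hlin0, h, add_zero]

/-- Membership in the half-open polytope from frequent membership in the polytope
along the segment towards `q`. -/
private lemma mem_halfOpen_of_frequently (d : ℕ) (F : Finset ((Fin d → ℝ) →ᵃ[ℝ] ℝ))
    (q x : Fin d → ℝ) (hq : ∀ f ∈ F, f q ≠ 0)
    (h : ∃ᶠ t in 𝓝[>] (0:ℝ), ∀ f ∈ F, f (AffineMap.lineMap x q t) ≤ 0) :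
    x ∈ halfOpenPolytope d F q := by
  have hle : ∀ f ∈ F, f x ≤ 0 := by
    intro f hf
    by_contra hpos
    push_neg at hpos
    have hcont : Continuous fun t : ℝ => f x + t * (f q - f x) := by continuity
    have htend : Tendsto (fun t : ℝ => f x + t * (f q - f x)) (𝓝 0) (𝓝 (f x)) := by
      have := hcont.tendsto 0
      simpa using this
    have hev : ∀ᶠ t in 𝓝 (0:ℝ), 0 < f x + t * (f q - f x) :=
      htend.eventually (eventually_gt_nhds hpos)
    have hev' : ∀ᶠ t in 𝓝[>] (0:ℝ), 0 < f (AffineMap.lineMap x q t) := by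
      filter_upwards [nhdsWithin_le_nhds hev] with t ht
      rwa [apply_lineMap']
    obtain ⟨t, ht1, ht2⟩ := (hev'.and_frequently h).exists
    exact absurd (ht2 f hf) (not_le.2 ht1)
  refine ⟨hle, fun f hf hfq => ?_⟩
  rcases (hle f hf).lt_or_eq with h' | h'
  · exact h'
  exfalso
  have hev : ∀ᶠ t in 𝓝[>] (0:ℝ), 0 < f (AffineMap.lineMap x q t) := by
    filter_upwards [eventually_mem_nhdsWithin] with t ht
    rw [apply_lineMap', h', sub_zero, zero_add]
    exact mul_pos ht hfq
  obtain ⟨t, ht1, ht2⟩ := (hev.and_frequently h).exists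
  exact absurd (ht2 f hf) (not_le.2 ht1)

/-- From membership in the half-open polytope, the segment towards `q` eventually
satisfies all inequalities strictly. -/
private lemma eventually_strict_of_mem (d : ℕ) (F : Finset ((Fin d → ℝ) →ᵃ[ℝ] ℝ))
    (q x : Fin d → ℝ) (hq : ∀ f ∈ F, f q ≠ 0) (hx : x ∈ halfOpenPolytope d F q) :
    ∀ᶠ t in 𝓝[>] (0:ℝ), ∀ f ∈ F, f (AffineMap.lineMap x q t) < 0 := by
  rw [eventually_all_finset]
  intro f hf
  rcases (hx.1 f hf).lt_or_eq with h' | h'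
  · have hcont : Continuous fun t : ℝ => f x + t * (f q - f x) := by continuity
    have htend : Tendsto (fun t : ℝ => f x + t * (f q - f x)) (𝓝 0) (𝓝 (f x)) := by
      simpa using hcont.tendsto 0
    have hev : ∀ᶠ t in 𝓝 (0:ℝ), f x + t * (f q - f x) < 0 :=
      htend.eventually (eventually_lt_nhds h')
    filter_upwards [nhdsWithin_le_nhds hev] with t ht
    rwa [apply_lineMap']
  · have hfq : f q < 0 := by
      rcases (hq f hf).lt_or_gt with h | h
      · exact h
      · exact absurd h' (ne_of_lt (hx.2 f hf h))
    filter_upwards [eventually_mem_nhdsWithin] with t (ht : (0:ℝ) < t)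
    rw [apply_lineMap', h', sub_zero, zero_add]
    exact mul_neg_of_pos_of_neg ht hfq

private lemma strict_set_open (d : ℕ) (G : Finset ((Fin d → ℝ) →ᵃ[ℝ] ℝ)) :
    IsOpen {x : Fin d → ℝ | ∀ f ∈ G, f x < 0} := by
  have : {x : Fin d → ℝ | ∀ f ∈ G, f x < 0} = ⋂ f ∈ G, {x | f x < 0} := by
    ext; simp
  rw [this]
  exact isOpen_biInter_finset fun f _ =>
    isOpen_lt f.continuous_of_finiteDimensional continuous_const

/-- Half-open decomposition (Köppe–Verdoolaege): if `P = P₁ ∪ ⋯ ∪ P_k` is a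
dissection of a full-dimensional polytope into full-dimensional polytopes with
lower-dimensional pairwise intersections, each given by irredundant facet
inequalities, and `q` lies on no facet hyperplane of any `P_i` (nor of `P`),
then the half-open polytopes `H_q P₁, …, H_q P_k` are pairwise disjoint with
union `H_q P`. -/
theorem halfopen_decomposition (d k : ℕ)
    (F : Fin k → Finset ((Fin d → ℝ) →ᵃ[ℝ] ℝ))
    (F₀ : Finset ((Fin d → ℝ) →ᵃ[ℝ] ℝ))
    (P : Fin k → Set (Fin d → ℝ)) (P₀ : Set (Fin d → ℝ))
    (hP : ∀ i, P i = {x | ∀ f ∈ F i, f x ≤ 0})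
    (hP₀ : P₀ = {x | ∀ f ∈ F₀, f x ≤ 0})
    (hcompact : ∀ i, IsCompact (P i)) (hcompact₀ : IsCompact P₀)
    (hfull : ∀ i, (interior (P i)).Nonempty) (hfull₀ : (interior P₀).Nonempty)
    (hfacet : ∀ i, ∀ f ∈ F i, ∃ x ∈ P i, f x = 0 ∧ ∀ g ∈ F i, g ≠ f → g x < 0)
    (hfacet₀ : ∀ f ∈ F₀, ∃ x ∈ P₀, f x = 0 ∧ ∀ g ∈ F₀, g ≠ f → g x < 0)
    (hunion : P₀ = ⋃ i, P i)
    (hdis : ∀ i j, i ≠ j → interior (P i ∩ P j) = ∅)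
    (q : Fin d → ℝ)
    (hq : ∀ i, ∀ f ∈ F i, f q ≠ 0) (hq₀ : ∀ f ∈ F₀, f q ≠ 0) :
    halfOpenPolytope d F₀ q = (⋃ i, halfOpenPolytope d (F i) q) ∧
      ∀ i j, i ≠ j →
        Disjoint (halfOpenPolytope d (F i) q) (halfOpenPolytope d (F j) q) := by
  constructor
  · ext x
    simp only [Set.mem_iUnion]
    constructor
    · intro hx
      have hev := eventually_strict_of_mem d F₀ q x hq₀ hx
      have hev2 : ∀ᶠ t in 𝓝[>] (0:ℝ), ∃ i, AffineMap.lineMap x q t ∈ P i := by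
        filter_upwards [hev] with t ht
        have hmem : AffineMap.lineMap x q t ∈ P₀ := by
          rw [hP₀]; exact fun f hf => (ht f hf).le
        rw [hunion] at hmem
        exact Set.mem_iUnion.1 hmem
      have hfreq : ∃ i, ∃ᶠ t in 𝓝[>] (0:ℝ), AffineMap.lineMap x q t ∈ P i := by
        by_contra hcon
        push_neg at hcon
        have hall := Filter.eventually_all.2 hcon
        obtain ⟨t, ht1, ht2⟩ := (hall.and_frequently hev2.frequently).exists
        obtain ⟨i, hi⟩ := ht2
        exact ht1 i hi
      obtain ⟨i, hi⟩ := hfreq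
      refine ⟨i, mem_halfOpen_of_frequently d (F i) q x (hq i) ?_⟩
      refine hi.mono fun t ht => ?_
      rw [hP] at ht
      exact ht
    · rintro ⟨i, hx⟩
      apply mem_halfOpen_of_frequently d F₀ q x hq₀
      apply Filter.Eventually.frequently
      filter_upwards [eventually_strict_of_mem d (F i) q x (hq i) hx] with t ht
      have hsub : {y : Fin d → ℝ | ∀ f ∈ F i, f y < 0} ⊆ P₀ := by
        intro y hy
        rw [hunion]
        exact Set.mem_iUnion.2 ⟨i, by rw [hP]; exact fun f hf => (hy f hf).le⟩
      have hmem : AffineMap.lineMap x q t ∈ interior P₀ :=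
        interior_maximal hsub (strict_set_open d (F i)) ht
      rw [hP₀] at hmem
      exact fun f hf => (facet_lt_of_interior d F₀ q _ hq₀ hmem f hf).le
  · intro i j hij
    rw [Set.disjoint_left]
    intro x hxi hxj
    have h1 := eventually_strict_of_mem d (F i) q x (hq i) hxi
    have h2 := eventually_strict_of_mem d (F j) q x (hq j) hxj
    obtain ⟨t, ht1, ht2⟩ := (h1.and h2).exists
    have hsub : {y : Fin d → ℝ | ∀ f ∈ F i, f y < 0} ∩
        {y : Fin d → ℝ | ∀ f ∈ F j, f y < 0} ⊆ P i ∩ P j := by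
      rintro y ⟨hy1, hy2⟩
      exact ⟨by rw [hP]; exact fun f hf => (hy1 f hf).le,
        by rw [hP]; exact fun f hf => (hy2 f hf).le⟩
    have hmem : AffineMap.lineMap x q t ∈ interior (P i ∩ P j) :=
      interior_maximal hsub ((strict_set_open d (F i)).inter (strict_set_open d (F j)))
        ⟨ht1, ht2⟩
    rw [hdis i j hij] at hmem
    exact hmem
end

section
/- For every finite simplicial complex 𝒞 on vertex set {1,…,m}, there exist lattice polytopes P and Q in ℝ^m such that the Q-complement complex {F ⊆ P face : F ∩ Q = ∅} is combinatorially isomorphic to 𝒞. Concretely, with P = m!·conv(e₁,…,e_m) and Q = m!·conv{w_I : I ∉ 𝒞} where w_I is the barycenter (1/|I|)Σ_{i∈I} e_i, the face F_I = conv(e_i : i ∈ I) of the simplex satisfies F_I ∩ conv{w_J : J ∉ 𝒞} = ∅ if and only if I ∈ 𝒞. -/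
/-- Barycenter `w_J = (1/|J|) Σ_{i∈J} e_i` of the face of the standard simplex
spanned by `{e_i : i ∈ J}`. -/
noncomputable def bary (m : ℕ) (J : Finset (Fin m)) : Fin m → ℝ :=
  (J.card : ℝ)⁻¹ • ∑ i ∈ J, Pi.single i (1 : ℝ)

lemma bary_apply (m : ℕ) (J : Finset (Fin m)) (j : Fin m) :
    bary m J j = if j ∈ J then (J.card : ℝ)⁻¹ else 0 := by
  simp only [bary, Pi.smul_apply, Finset.sum_apply, smul_eq_mul]
  rw [Finset.sum_congr rfl (fun i _ => (Pi.single_apply i (1:ℝ) j))]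
  simp only [Finset.sum_ite_eq, Finset.mem_coe]
  split <;> simp

lemma bary_nonneg (m : ℕ) (J : Finset (Fin m)) (j : Fin m) : 0 ≤ bary m J j := by
  rw [bary_apply]; split <;> positivity

/-- Q-complements are universal: for a simplicial complex `𝒞` on `{1,…,m}`,
the face `F_I = conv(e_i : i ∈ I)` of the standard simplex is disjoint from
`Q = conv{w_J : J ∉ 𝒞}` (the convex hull of the barycenters of the non-faces)
if and only if `I ∈ 𝒞`. -/
theorem Q_complement_universal (m : ℕ) (𝒞 : Finset (Finset (Fin m)))
    (hempty : ∅ ∈ 𝒞)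
    (hdown : ∀ s ∈ 𝒞, ∀ t ⊆ s, t ∈ 𝒞)
    (I : Finset (Fin m)) (hI : I.Nonempty) :
    convexHull ℝ ((fun i : Fin m => Pi.single i (1 : ℝ)) '' (I : Set (Fin m))) ∩
        convexHull ℝ {x : Fin m → ℝ | ∃ J : Finset (Fin m), J ∉ 𝒞 ∧ x = bary m J} =
      ∅ ↔ I ∈ 𝒞 := by
  constructor
  · -- contrapositive: if I ∉ 𝒞 then bary m I is in both sets
    intro h
    by_contra hIC
    have hcard : (0:ℝ) < I.card := by exact_mod_cast Finset.card_pos.mpr hI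
    have hb : bary m I ∈
        convexHull ℝ ((fun i : Fin m => Pi.single i (1 : ℝ)) '' (I : Set (Fin m))) := by
      have := I.centerMass_mem_convexHull (w := fun _ => (1:ℝ))
        (z := fun i => Pi.single i (1:ℝ))
        (s := (fun i : Fin m => Pi.single i (1 : ℝ)) '' (I : Set (Fin m)))
        (fun _ _ => zero_le_one)
        (by simpa using hcard) (fun i hi => ⟨i, hi, rfl⟩)
      have heq : I.centerMass (fun _ => (1:ℝ)) (fun i => Pi.single i (1:ℝ)) = bary m I := by
        simp [Finset.centerMass, bary]
      rwa [heq] at this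
    have hb2 : bary m I ∈
        convexHull ℝ {x : Fin m → ℝ | ∃ J : Finset (Fin m), J ∉ 𝒞 ∧ x = bary m J} :=
      subset_convexHull ℝ _ ⟨I, hIC, rfl⟩
    have : bary m I ∈ (∅ : Set (Fin m → ℝ)) := h ▸ ⟨hb, hb2⟩
    exact this
  · intro hIC
    rw [Set.eq_empty_iff_forall_notMem]
    rintro x ⟨hx1, hx2⟩
    -- x is supported on I and nonnegative
    have hK : x ∈ {y : Fin m → ℝ | ∀ j, 0 ≤ y j ∧ (j ∉ I → y j = 0)} := by
      refine convexHull_min ?_ ?_ hx1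
      · rintro y ⟨i, hi, rfl⟩ j
        simp only [Pi.single_apply]
        constructor
        · split <;> norm_num
        · intro hj
          split
          · next hji => exact absurd (hji ▸ hi) hj
          · rfl
      · rintro p hp q hq a b ha hb hab j
        have h1 := (hp j).1
        have h2 := (hq j).1
        constructor
        · simp only [Pi.add_apply, Pi.smul_apply, smul_eq_mul]
          nlinarith
        · intro hj
          simp [Pi.add_apply, Pi.smul_apply, (hp j).2 hj, (hq j).2 hj]
    -- representation of x as a convex combination of barycenters of non-faces
    rw [convexHull_eq] at hx2
    obtain ⟨ι, t, w, z, hw0, hw1, hz, hxeq⟩ := hx2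
    -- choose an index with positive weight
    obtain ⟨i₀, hi₀t, hi₀⟩ : ∃ i ∈ t, (0:ℝ) < w i := by
      by_contra hc
      push_neg at hc
      have : ∑ i ∈ t, w i ≤ 0 := Finset.sum_nonpos hc
      linarith [hw1 ▸ this]
    obtain ⟨J, hJC, hJeq⟩ := hz i₀ hi₀t
    have hJne : J.Nonempty := by
      rcases J.eq_empty_or_nonempty with rfl | h
      · exact absurd hempty hJC
      · exact h
    -- show J ⊆ I, contradicting J ∉ 𝒞
    have hJI : J ⊆ I := by
      intro j hj
      by_contra hjI
      have hxj0 : x j = 0 := (hK j).2 hjI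
      have hxj : x j = ∑ i ∈ t, w i * z i j := by
        rw [← hxeq, Finset.centerMass_eq_of_sum_1 _ _ hw1]
        simp
      have hterm : ∀ i ∈ t, 0 ≤ w i * z i j := by
        intro i hit
        obtain ⟨J', _, hJ'eq⟩ := hz i hit
        rw [hJ'eq]
        exact mul_nonneg (hw0 i hit) (bary_nonneg m J' j)
      have hpos : 0 < w i₀ * z i₀ j := by
        rw [hJeq, bary_apply, if_pos hj]
        have : (0:ℝ) < J.card := by exact_mod_cast Finset.card_pos.mpr hJne
        positivity
      have : 0 < x j := by
        rw [hxj]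
        exact lt_of_lt_of_le hpos (Finset.single_le_sum hterm hi₀t)
      linarith [hxj0 ▸ this]
    exact hJC (hdown I hIC J hJI)
end

section
/- The Steiner valuation is not combinatorially positive in dimension d ≥ 2: for the segment P = [0, αe₁] ⊂ ℝ^d and S(K) = vol_d(K + B_d) with B_d the unit ball, the alternating face sum S(relint P) = S(P) − S({0}) − S({αe₁}) equals α·vol_{d−1}(B_{d−1}) − vol_d(B_d), which is negative for sufficiently small α > 0. -/
open MeasureTheory
open scoped Pointwise

/-- The alternating face sum `S(relint P) = S(P) - S({0}) - S({αe₁})` of the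
Steiner valuation `S(K) = vol(K + B_d)` for the segment `P = [0, αe₁] ⊂ ℝ^d`,
`d = d'+2 ≥ 2`. -/
noncomputable def steinerFaceSum (d : ℕ) (α : ℝ) : ℝ :=
  (volume (segment ℝ (0 : EuclideanSpace ℝ (Fin (d + 2)))
      (α • EuclideanSpace.single (0 : Fin (d + 2)) (1 : ℝ)) +
    Metric.closedBall (0 : EuclideanSpace ℝ (Fin (d + 2))) 1)).toReal -
  (volume (({0} : Set (EuclideanSpace ℝ (Fin (d + 2)))) +
    Metric.closedBall (0 : EuclideanSpace ℝ (Fin (d + 2))) 1)).toReal -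
  (volume (({α • EuclideanSpace.single (0 : Fin (d + 2)) (1 : ℝ)} :
      Set (EuclideanSpace ℝ (Fin (d + 2)))) +
    Metric.closedBall (0 : EuclideanSpace ℝ (Fin (d + 2))) 1)).toReal



private lemma steiner_sqrt_le_one_iff {a : ℝ} (ha : 0 ≤ a) : Real.sqrt a ≤ 1 ↔ a ≤ 1 := by
  constructor
  · intro h
    nlinarith [Real.sq_sqrt ha, Real.sqrt_nonneg a]
  · intro h
    simpa using Real.sqrt_le_sqrt h

/-- Measurable equivalence splitting off the first coordinate of Euclidean space. -/
noncomputable def steinerSplit (n : ℕ) :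
    EuclideanSpace ℝ (Fin (n+1)) ≃ᵐ ℝ × EuclideanSpace ℝ (Fin n) :=
  (MeasurableEquiv.toLp 2 (Fin (n+1) → ℝ)).symm.trans
    ((MeasurableEquiv.piFinSuccAbove (fun _ => ℝ) 0).trans
      ((MeasurableEquiv.refl ℝ).prodCongr (MeasurableEquiv.toLp 2 (Fin n → ℝ)).symm.symm))

lemma steinerSplit_mp (n : ℕ) : MeasurePreserving (steinerSplit n) volume volume :=
  (((MeasurePreserving.id _).prod
      (EuclideanSpace.volume_preserving_symm_measurableEquiv_toLp (Fin n)).symm).comp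
    (volume_preserving_piFinSuccAbove (fun _ => ℝ) 0)).comp
    (EuclideanSpace.volume_preserving_symm_measurableEquiv_toLp (Fin (n+1)))

lemma steinerSplit_fst {n : ℕ} (x : EuclideanSpace ℝ (Fin (n+1))) :
    (steinerSplit n x).1 = x 0 := rfl

lemma steinerSplit_snd {n : ℕ} (x : EuclideanSpace ℝ (Fin (n+1))) (j : Fin n) :
    (steinerSplit n x).2 j = x j.succ := rfl

private lemma steiner_real_cases (α x0 q : ℝ) (hα : 0 < α) :
    (∃ s ∈ Set.Icc (0:ℝ) α, (x0 - s)^2 + q ≤ 1) ↔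
      (x0 < 0 ∧ x0^2 + q ≤ 1) ∨ (0 ≤ x0 ∧ x0 ≤ α ∧ q ≤ 1) ∨
        (α < x0 ∧ (x0 - α)^2 + q ≤ 1) := by
  constructor
  · rintro ⟨s, ⟨hs0, hsα⟩, h⟩
    rcases lt_or_ge x0 0 with h0 | h0
    · exact Or.inl ⟨h0, by nlinarith [mul_nonneg hs0 (neg_nonneg.2 h0.le)]⟩
    · rcases le_or_gt x0 α with h1 | h1
      · exact Or.inr (Or.inl ⟨h0, h1, by nlinarith [sq_nonneg (x0 - s)]⟩)
      · refine Or.inr (Or.inr ⟨h1, ?_⟩)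
        nlinarith [mul_nonneg (sub_nonneg.2 hsα) (by linarith : (0:ℝ) ≤ 2*x0 - s - α)]
  · rintro (⟨h0, h⟩ | ⟨h0, h1, h⟩ | ⟨h1, h⟩)
    · exact ⟨0, ⟨le_refl 0, hα.le⟩, by simpa using h⟩
    · exact ⟨x0, ⟨h0, h1⟩, by simpa using h⟩
    · exact ⟨α, ⟨hα.le, le_refl α⟩, h⟩

private lemma steiner_dist_iff {n : ℕ} (x : EuclideanSpace ℝ (Fin (n+1))) (s : ℝ) :
    dist x (s • EuclideanSpace.single (0 : Fin (n+1)) (1:ℝ)) ≤ 1 ↔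
      (x 0 - s)^2 + ∑ j : Fin n, (x j.succ)^2 ≤ 1 := by
  have hsum : ∑ i, dist (x i) ((s • EuclideanSpace.single (0 : Fin (n+1)) (1:ℝ)) i)^2
      = (x 0 - s)^2 + ∑ j : Fin n, (x j.succ)^2 := by
    rw [Fin.sum_univ_succ]
    congr 1
    · have h0 : (s • EuclideanSpace.single (0 : Fin (n+1)) (1:ℝ)) 0 = s := by
        simp [EuclideanSpace.single_apply]
      rw [h0, Real.dist_eq, sq_abs]
    · refine Finset.sum_congr rfl fun j _ => ?_
      simp [Real.dist_eq, sq_abs, EuclideanSpace.single_apply, Fin.succ_ne_zero]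
  rw [EuclideanSpace.dist_eq, hsum, steiner_sqrt_le_one_iff (by positivity)]

private lemma steiner_ball_iff {n : ℕ} (x : EuclideanSpace ℝ (Fin (n+1))) :
    x ∈ Metric.closedBall (0 : EuclideanSpace ℝ (Fin (n+1))) 1 ↔
      (x 0)^2 + ∑ j : Fin n, (x j.succ)^2 ≤ 1 := by
  rw [Metric.mem_closedBall]
  simpa using steiner_dist_iff x 0

private lemma steiner_hyperplane_null (n : ℕ) :
    volume {x : EuclideanSpace ℝ (Fin (n+1)) | x 0 = 0} = 0 := by
  have h : {x : EuclideanSpace ℝ (Fin (n+1)) | x 0 = 0} =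
      (LinearMap.ker (EuclideanSpace.proj (0 : Fin (n+1)) :
        EuclideanSpace ℝ (Fin (n+1)) →L[ℝ] ℝ).toLinearMap : Set (EuclideanSpace ℝ (Fin (n+1)))) := by
    ext x; simp [LinearMap.mem_ker]
  rw [h]
  refine Measure.addHaar_submodule _ _ ?_
  intro htop
  have : EuclideanSpace.single (0 : Fin (n+1)) (1:ℝ) ∈
      LinearMap.ker (EuclideanSpace.proj (0 : Fin (n+1)) :
        EuclideanSpace ℝ (Fin (n+1)) →L[ℝ] ℝ).toLinearMap := htop ▸ Submodule.mem_top
  simp [LinearMap.mem_ker] at this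

set_option maxHeartbeats 2000000 in
/-- Volume of the tube around a segment. -/
private lemma steiner_tube_vol (n : ℕ) (α : ℝ) (hα : 0 < α) :
    volume (segment ℝ (0 : EuclideanSpace ℝ (Fin (n+1)))
        (α • EuclideanSpace.single (0 : Fin (n+1)) (1:ℝ)) +
      Metric.closedBall (0 : EuclideanSpace ℝ (Fin (n+1))) 1) =
    volume (Metric.closedBall (0 : EuclideanSpace ℝ (Fin (n+1))) 1) +
      ENNReal.ofReal α * volume (Metric.closedBall (0 : EuclideanSpace ℝ (Fin n)) 1) := by
  set e : EuclideanSpace ℝ (Fin (n+1)) := EuclideanSpace.single (0 : Fin (n+1)) (1:ℝ) with he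
  set B : Set (EuclideanSpace ℝ (Fin (n+1))) := Metric.closedBall 0 1 with hB
  set Q : EuclideanSpace ℝ (Fin (n+1)) → ℝ := fun x => ∑ j : Fin n, (x j.succ)^2 with hQ
  set L : Set (EuclideanSpace ℝ (Fin (n+1))) := {x | x 0 < 0} ∩ B with hL
  set C : Set (EuclideanSpace ℝ (Fin (n+1))) := (steinerSplit n) ⁻¹'
    (Set.Icc 0 α ×ˢ Metric.closedBall (0 : EuclideanSpace ℝ (Fin n)) 1) with hC
  set R : Set (EuclideanSpace ℝ (Fin (n+1))) := (α • e) +ᵥ ({x | 0 < x 0} ∩ B) with hR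
  have hCmem : ∀ x : EuclideanSpace ℝ (Fin (n+1)), x ∈ C ↔ (0 ≤ x 0 ∧ x 0 ≤ α ∧ Q x ≤ 1) := by
    intro x
    have hn : ‖(steinerSplit n x).2‖ ≤ 1 ↔ Q x ≤ 1 := by
      rw [EuclideanSpace.norm_eq, steiner_sqrt_le_one_iff (by positivity)]
      have h : ∀ j : Fin n, ‖(steinerSplit n x).2 j‖ = |x j.succ| := fun j => by
        rw [steinerSplit_snd]; exact rfl
      simp only [h, sq_abs, hQ]
    rw [hC, Set.mem_preimage, Set.mem_prod, Set.mem_Icc, mem_closedBall_zero_iff,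
      steinerSplit_fst, hn]
    tauto
  have hcoord : ∀ x : EuclideanSpace ℝ (Fin (n+1)), (-(α • e) + x) 0 = x 0 - α := by
    intro x
    have h1 : (-(α • e) + x) 0 = -((α • e) 0) + x 0 := rfl
    have h2 : (α • e) 0 = α := by simp [he, EuclideanSpace.single_apply]
    rw [h1, h2]; ring
  have hRmem : ∀ x : EuclideanSpace ℝ (Fin (n+1)), x ∈ R ↔ (α < x 0 ∧ (x 0 - α)^2 + Q x ≤ 1) := by
    intro x
    rw [hR, Set.mem_vadd_set_iff_neg_vadd_mem, vadd_eq_add, Set.mem_inter_iff,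
      Set.mem_setOf_eq, hcoord x, sub_pos]
    have h1 : (-(α • e) + x) ∈ B ↔ (x 0 - α)^2 + Q x ≤ 1 := by
      rw [hB, mem_closedBall_zero_iff, show -(α • e) + x = x - α • e by abel, ← dist_eq_norm]
      exact steiner_dist_iff x α
    rw [h1]
  have hunion : segment ℝ (0 : EuclideanSpace ℝ (Fin (n+1))) (α • e) + B = L ∪ C ∪ R := by
    ext x
    have hseg : x ∈ segment ℝ (0 : EuclideanSpace ℝ (Fin (n+1))) (α • e) + B ↔
        ∃ s ∈ Set.Icc (0:ℝ) α, (x 0 - s)^2 + Q x ≤ 1 := by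
      constructor
      · rintro ⟨p, hp, b, hb, rfl⟩
        rw [segment_eq_image ℝ] at hp
        obtain ⟨t, ht, rfl⟩ := hp
        simp only [smul_zero, zero_add, smul_smul]
        refine ⟨t * α, ⟨mul_nonneg ht.1 hα.le,
          by nlinarith [mul_nonneg (sub_nonneg.2 ht.2) hα.le]⟩, ?_⟩
        rw [← steiner_dist_iff ((t * α) • e + b) (t * α)]
        simpa [dist_eq_norm, ← he, add_sub_cancel_left] using mem_closedBall_zero_iff.1 hb
      · rintro ⟨s, hs, hle⟩
        refine ⟨s • e, ?_, x - s • e, ?_, by show s • e + (x - s • e) = x; abel⟩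
        · rw [segment_eq_image ℝ]
          refine ⟨s / α, ⟨div_nonneg hs.1 hα.le, (div_le_one hα).2 hs.2⟩, ?_⟩
          simp only [smul_zero, zero_add, smul_smul]
          rw [div_mul_cancel₀ _ hα.ne']
        · rw [mem_closedBall_zero_iff, ← dist_eq_norm]
          exact (steiner_dist_iff x s).2 hle
    have hLmem : x ∈ L ↔ (x 0 < 0 ∧ (x 0)^2 + Q x ≤ 1) := by
      rw [hL, Set.mem_inter_iff, Set.mem_setOf_eq, steiner_ball_iff]
    rw [hseg, steiner_real_cases α (x 0) (Q x) hα, Set.mem_union, Set.mem_union,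
      hLmem, hCmem, hRmem]
    tauto
  have hmeas0 : Measurable fun x : EuclideanSpace ℝ (Fin (n+1)) => x 0 := by
    have h : (fun x : EuclideanSpace ℝ (Fin (n+1)) => x 0) = (fun p : ℝ × EuclideanSpace ℝ (Fin n) => p.1) ∘ steinerSplit n :=
      rfl
    rw [h]
    exact measurable_fst.comp (steinerSplit n).measurable
  have hLm : MeasurableSet L := ((measurableSet_Iio.preimage hmeas0)).inter
    Metric.isClosed_closedBall.measurableSet
  have hCm : MeasurableSet C := (steinerSplit n).measurable
    (measurableSet_Icc.prod Metric.isClosed_closedBall.measurableSet)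
  have hposm : MeasurableSet ({x : EuclideanSpace ℝ (Fin (n+1)) | 0 < x 0} ∩ B) :=
    (measurableSet_Ioi.preimage hmeas0).inter Metric.isClosed_closedBall.measurableSet
  have hRm : MeasurableSet R := hposm.const_vadd _
  have hdLC : Disjoint L C := by
    rw [Set.disjoint_left]
    intro x hx hx'
    have h0 : x 0 < 0 := hx.1
    have h1 := ((hCmem x).1 hx').1
    linarith
  have hdLCR : Disjoint (L ∪ C) R := by
    rw [Set.disjoint_left]
    rintro x (hx | hx) hx'
    · have h0 : x 0 < 0 := hx.1
      have h1 := ((hRmem x).1 hx').1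
      linarith
    · have h0 := ((hCmem x).1 hx).2.1
      have h1 := ((hRmem x).1 hx').1
      linarith
  have hC_vol : volume C = ENNReal.ofReal α *
      volume (Metric.closedBall (0 : EuclideanSpace ℝ (Fin n)) 1) := by
    rw [hC, (steinerSplit_mp n).measure_preimage
      (measurableSet_Icc.prod Metric.isClosed_closedBall.measurableSet).nullMeasurableSet,
      Measure.volume_eq_prod, Measure.prod_prod, Real.volume_Icc, sub_zero]
  have hLR_vol : volume L + volume R = volume B := by
    have hRv : volume R = volume ({x : EuclideanSpace ℝ (Fin (n+1)) | 0 < x 0} ∩ B) := by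
      rw [hR]; exact measure_vadd _ _ _
    have hsub1 : L ∪ ({x : EuclideanSpace ℝ (Fin (n+1)) | 0 < x 0} ∩ B) ⊆ B :=
      Set.union_subset Set.inter_subset_right Set.inter_subset_right
    have hsub2 : B ⊆ (L ∪ ({x : EuclideanSpace ℝ (Fin (n+1)) | 0 < x 0} ∩ B)) ∪
        ({x : EuclideanSpace ℝ (Fin (n+1)) | x 0 = 0} ∩ B) := by
      intro x hx
      rcases lt_trichotomy (x 0) 0 with h | h | h
      · exact Or.inl (Or.inl ⟨h, hx⟩)
      · exact Or.inr ⟨h, hx⟩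
      · exact Or.inl (Or.inr ⟨h, hx⟩)
    have hzero : volume ({x : EuclideanSpace ℝ (Fin (n+1)) | x 0 = 0} ∩ B) = 0 :=
      measure_mono_null Set.inter_subset_left (steiner_hyperplane_null n)
    have hd : Disjoint L ({x : EuclideanSpace ℝ (Fin (n+1)) | 0 < x 0} ∩ B) := by
      rw [Set.disjoint_left]
      intro x hx hx'
      have h0 : x 0 < 0 := hx.1
      have h1 : 0 < x 0 := hx'.1
      linarith
    calc volume L + volume R = volume (L ∪ ({x : EuclideanSpace ℝ (Fin (n+1)) | 0 < x 0} ∩ B)) := by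
          rw [hRv, measure_union hd hposm]
      _ = volume B := by
          refine le_antisymm (measure_mono hsub1) ?_
          calc volume B ≤ volume ((L ∪ ({x : EuclideanSpace ℝ (Fin (n+1)) | 0 < x 0} ∩ B)) ∪
                ({x : EuclideanSpace ℝ (Fin (n+1)) | x 0 = 0} ∩ B)) := measure_mono hsub2
            _ ≤ volume (L ∪ ({x : EuclideanSpace ℝ (Fin (n+1)) | 0 < x 0} ∩ B)) +
                volume ({x : EuclideanSpace ℝ (Fin (n+1)) | x 0 = 0} ∩ B) := measure_union_le _ _
            _ = volume (L ∪ ({x : EuclideanSpace ℝ (Fin (n+1)) | 0 < x 0} ∩ B)) := by rw [hzero, add_zero]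
  rw [hunion, measure_union hdLCR hRm, measure_union hdLC hCm, hC_vol, ← hLR_vol]
  ring

private lemma steiner_singleton_vol {n : ℕ} (p : EuclideanSpace ℝ (Fin n)) :
    volume (({p} : Set (EuclideanSpace ℝ (Fin n))) + Metric.closedBall 0 1) =
      volume (Metric.closedBall (0 : EuclideanSpace ℝ (Fin n)) 1) := by
  rw [Set.singleton_add]
  have h : (p + ·) '' Metric.closedBall (0 : EuclideanSpace ℝ (Fin n)) 1 =
      p +ᵥ Metric.closedBall (0 : EuclideanSpace ℝ (Fin n)) 1 := rfl
  rw [h, measure_vadd]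

/-- main -/
theorem steiner_not_combinatorially_positive (d : ℕ) :
    (∀ α : ℝ, 0 < α →
      steinerFaceSum d α =
        α * (volume (Metric.closedBall (0 : EuclideanSpace ℝ (Fin (d + 1))) 1)).toReal -
          (volume (Metric.closedBall (0 : EuclideanSpace ℝ (Fin (d + 2))) 1)).toReal) ∧
    ∃ α₀ : ℝ, 0 < α₀ ∧ ∀ α : ℝ, 0 < α → α < α₀ → steinerFaceSum d α < 0 := by
  set b := (volume (Metric.closedBall (0 : EuclideanSpace ℝ (Fin (d + 2))) 1)).toReal with hb
  set c := (volume (Metric.closedBall (0 : EuclideanSpace ℝ (Fin (d + 1))) 1)).toReal with hc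
  have hbfin : volume (Metric.closedBall (0 : EuclideanSpace ℝ (Fin (d + 2))) 1) ≠ ⊤ :=
    (measure_closedBall_lt_top).ne
  have hcfin : volume (Metric.closedBall (0 : EuclideanSpace ℝ (Fin (d + 1))) 1) ≠ ⊤ :=
    (measure_closedBall_lt_top).ne
  have hbpos : 0 < b := by
    rw [hb]
    exact ENNReal.toReal_pos (Metric.measure_closedBall_pos volume _ one_pos).ne' hbfin
  have hcnn : 0 ≤ c := ENNReal.toReal_nonneg
  have key : ∀ α : ℝ, 0 < α → steinerFaceSum d α = α * c - b := by
    intro α hα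
    unfold steinerFaceSum
    rw [steiner_tube_vol (d+1) α hα, steiner_singleton_vol, steiner_singleton_vol,
      ENNReal.toReal_add hbfin (ENNReal.mul_ne_top ENNReal.ofReal_ne_top hcfin),
      ENNReal.toReal_mul, ENNReal.toReal_ofReal hα.le]
    rw [← hb, ← hc]
    ring
  refine ⟨key, b / (c + 1), div_pos hbpos (by linarith), fun α hα hαlt => ?_⟩
  rw [key α hα]
  have h1 : α * c ≤ (b / (c + 1)) * c :=
    mul_le_mul_of_nonneg_right hαlt.le hcnn
  have h2 : (b / (c + 1)) * c < b := by
    rw [div_mul_eq_mul_div, div_lt_iff₀ (by linarith)]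
    nlinarith
  linarith
end
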